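/- arXiv:2002.08924 — 2 statements merged into one kernel-verified Lean document; each statement's English description precedes it below -/
import Mathlib

section
/- For every all-conserving ternary nearest-neighbour rule f, there is no all-conserving f for which all three binary projections f|_{01}, f|_{02}, f|_{12} exist and each is (as an elementary CA rule) equal to rule 184 or rule 226. -/
instance (n : ℕ) : NeZero (n + 3) := ⟨by omega⟩

abbrev Rule3 := Fin 3 → Fin 3 → Fin 3 → Fin 3
abbrev Rule2 := Fin 2 → Fin 2 → Fin 2 → Fin 2

/-- Global map of a ternary nearest-neighbour CA on cyclic configurations. -/
def glob3 {n : ℕ} (f : Rule3) (x : ZMod n → Fin 3) : ZMod n → Fin 3 :=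
  fun i => f (x (i - 1)) (x i) (x (i + 1))

/-- Global map of a binary (elementary) CA on cyclic configurations. -/
def glob2 {n : ℕ} (g : Rule2) (x : ZMod n → Fin 2) : ZMod n → Fin 2 :=
  fun i => g (x (i - 1)) (x i) (x (i + 1))

/-- `f` conserves the additive quantity with weight `Ψ` on all cyclic
configurations of all lengths `L ≥ 3`. -/
def conserves3 (f : Rule3) (Ψ : Fin 3 → ℤ) : Prop :=
  ∀ L : ℕ, ∀ x : ZMod (L + 3) → Fin 3,
    (∑ i, Ψ (glob3 f x i)) = ∑ i, Ψ (x i)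

def Ψ0 : Fin 3 → ℤ := fun x => (1 - (x.val : ℤ)) * (2 - (x.val : ℤ)) / 2
def Ψ1 : Fin 3 → ℤ := fun x => (x.val : ℤ) * (2 - (x.val : ℤ))
def Ψ2 : Fin 3 → ℤ := fun x => (x.val : ℤ) * ((x.val : ℤ) - 1) / 2
def Ψs : Fin 3 → ℤ := fun x => (x.val : ℤ)

/-- `f` conserves the number of 0's, of 1's and of 2's. -/
def allConserving3 (f : Rule3) : Prop :=
  conserves3 f Ψ0 ∧ conserves3 f Ψ1 ∧ conserves3 f Ψ2

/-- A binary rule is number-conserving. -/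
def numConserving2 (g : Rule2) : Prop :=
  ∀ L : ℕ, ∀ x : ZMod (L + 3) → Fin 2,
    (∑ i, (glob2 g x i).val) = ∑ i, (x i).val

/-- The elementary CA rule with Wolfram number `w`. -/
def ecaRule (w : ℕ) : Rule2 :=
  fun a b c => ⟨w / 2 ^ (4 * a.val + 2 * b.val + c.val) % 2, Nat.mod_lt _ (by norm_num)⟩

/-- Wolfram number of a binary rule. -/
def wolfram2 (g : Rule2) : ℕ :=
  ∑ a : Fin 2, ∑ b : Fin 2, ∑ c : Fin 2,
    (g a b c).val * 2 ^ (4 * a.val + 2 * b.val + c.val)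

/-- Embedding of `{0,1}` into `{0,1,2}` as `{0,1}`. -/
def i01 : Fin 2 → Fin 3 := Fin.castLE (by norm_num)
/-- Embedding of `{0,1}` into `{0,1,2}` as `{0,2}`. -/
def i02 : Fin 2 → Fin 3 := fun a => ⟨2 * a.val, by have := a.isLt; omega⟩
/-- Embedding of `{0,1}` into `{0,1,2}` as `{1,2}`. -/
def i12 : Fin 2 → Fin 3 := fun a => ⟨a.val + 1, by have := a.isLt; omega⟩

/-- The binary projection `f|_{01}` of `f` exists and equals the binary rule `h`. -/
def agrees01 (f : Rule3) (h : Rule2) : Prop :=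
  ∀ a b c : Fin 2, f (i01 a) (i01 b) (i01 c) = i01 (h a b c)

/-- The binary projection `f|_{02}` of `f` exists and equals the binary rule `h`. -/
def agrees02 (f : Rule3) (h : Rule2) : Prop :=
  ∀ a b c : Fin 2, f (i02 a) (i02 b) (i02 c) = i02 (h a b c)

/-- The binary projection `f|_{12}` of `f` exists and equals the binary rule `h`. -/
def agrees12 (f : Rule3) (h : Rule2) : Prop :=
  ∀ a b c : Fin 2, f (i12 a) (i12 b) (i12 c) = i12 (h a b c)

/-- `f` is reducible to two states: all three binary projections exist. -/
def reducible3 (f : Rule3) : Prop :=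
  (∃ h, agrees01 f h) ∧ (∃ h, agrees02 f h) ∧ (∃ h, agrees12 f h)

/-- Number of occurrences of symbol `k` in the cyclic configuration `x`. -/
def count3 {n : ℕ} [NeZero n] (x : ZMod n → Fin 3) (k : Fin 3) : ℕ :=
  (Finset.univ.filter fun i => x i = k).card


/-! ### Auxiliary machinery for the proof -/

def pickRule (b : Bool) : Rule2 := if b then ecaRule 184 else ecaRule 226

def mkRule (g01 g02 g12 : Rule2) (u0 u1 u2 u3 u4 u5 : Fin 3) : Rule3 :=
  ![![![i01 (g01 0 0 0), i01 (g01 0 0 1), i02 (g02 0 0 1)], ![i01 (g01 0 1 0), i01 (g01 0 1 1), u0], ![i02 (g02 0 1 0), u1, i02 (g02 0 1 1)]],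
   ![![i01 (g01 1 0 0), i01 (g01 1 0 1), u2], ![i01 (g01 1 1 0), i01 (g01 1 1 1), i12 (g12 0 0 1)], ![u3, i12 (g12 0 1 0), i12 (g12 0 1 1)]],
   ![![i02 (g02 1 0 0), u4, i02 (g02 1 0 1)], ![u5, i12 (g12 1 0 0), i12 (g12 1 0 1)], ![i02 (g02 1 1 0), i12 (g12 1 1 0), i02 (g02 1 1 1)]]]

abbrev cAt3 (f : Rule3) (x : ZMod (0 + 3) → Fin 3) : Prop :=
  (Ψ0 (glob3 f x 0) + Ψ0 (glob3 f x 1) + Ψ0 (glob3 f x 2)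
    = Ψ0 (x 0) + Ψ0 (x 1) + Ψ0 (x 2)) ∧
  (Ψ1 (glob3 f x 0) + Ψ1 (glob3 f x 1) + Ψ1 (glob3 f x 2)
    = Ψ1 (x 0) + Ψ1 (x 1) + Ψ1 (x 2)) ∧
  (Ψ2 (glob3 f x 0) + Ψ2 (glob3 f x 1) + Ψ2 (glob3 f x 2)
    = Ψ2 (x 0) + Ψ2 (x 1) + Ψ2 (x 2))

abbrev cAt4 (f : Rule3) (x : ZMod (1 + 3) → Fin 3) : Prop :=
  (Ψ0 (glob3 f x 0) + Ψ0 (glob3 f x 1) + Ψ0 (glob3 f x 2) + Ψ0 (glob3 f x 3)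
    = Ψ0 (x 0) + Ψ0 (x 1) + Ψ0 (x 2) + Ψ0 (x 3)) ∧
  (Ψ1 (glob3 f x 0) + Ψ1 (glob3 f x 1) + Ψ1 (glob3 f x 2) + Ψ1 (glob3 f x 3)
    = Ψ1 (x 0) + Ψ1 (x 1) + Ψ1 (x 2) + Ψ1 (x 3)) ∧
  (Ψ2 (glob3 f x 0) + Ψ2 (glob3 f x 1) + Ψ2 (glob3 f x 2) + Ψ2 (glob3 f x 3)
    = Ψ2 (x 0) + Ψ2 (x 1) + Ψ2 (x 2) + Ψ2 (x 3))

abbrev condFor (f : Rule3) : Prop :=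
  cAt3 f ![0, 2, 1] ∧ cAt4 f ![0, 0, 1, 2] ∧ cAt4 f ![0, 1, 1, 2] ∧
    cAt4 f ![0, 1, 0, 2] ∧ cAt4 f ![0, 1, 2, 1]

lemma sum_zmod3 (g : ZMod (0 + 3) → ℤ) : (∑ i, g i) = g 0 + g 1 + g 2 :=
  Fin.sum_univ_three g

lemma sum_zmod4 (g : ZMod (1 + 3) → ℤ) : (∑ i, g i) = g 0 + g 1 + g 2 + g 3 :=
  Fin.sum_univ_four g

set_option maxRecDepth 100000 in
set_option maxHeartbeats 4000000 in
theorem key_lemma : ∀ b1 b2 b3 : Bool, ∀ u0 u1 u2 u3 u4 u5 : Fin 3,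
    ¬ condFor (mkRule (pickRule b1) (pickRule b2) (pickRule b3) u0 u1 u2 u3 u4 u5) := by
  decide

set_option maxRecDepth 100000 in
theorem wolfram_det : ∀ h : Rule2,
    wolfram2 h = 184 ∨ wolfram2 h = 226 → ∃ b : Bool, h = pickRule b := by decide

/-- No all-conserving ternary rule has all three binary projections equal to
elementary rule 184 or 226. -/
theorem no_allConserving_with_projections_184_226 :
    ¬ ∃ f : Rule3, allConserving3 f ∧
      (∃ h, agrees01 f h ∧ (wolfram2 h = 184 ∨ wolfram2 h = 226)) ∧
      (∃ h, agrees02 f h ∧ (wolfram2 h = 184 ∨ wolfram2 h = 226)) ∧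
      (∃ h, agrees12 f h ∧ (wolfram2 h = 184 ∨ wolfram2 h = 226)) := by
  
  rintro ⟨f, ⟨c0, c1, c2⟩, ⟨h01, a01, w01⟩, ⟨h02, a02, w02⟩, ⟨h12, a12, w12⟩⟩
  obtain ⟨b1, rfl⟩ := wolfram_det h01 w01
  obtain ⟨b2, rfl⟩ := wolfram_det h02 w02
  obtain ⟨b3, rfl⟩ := wolfram_det h12 w12
  have hf : f = mkRule (pickRule b1) (pickRule b2) (pickRule b3)
      (f 0 1 2) (f 0 2 1) (f 1 0 2) (f 1 2 0) (f 2 0 1) (f 2 1 0) := by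
    funext a b c
    fin_cases a <;> fin_cases b <;> fin_cases c <;>
      first
        | rfl
        | exact a01 0 0 0 | exact a01 0 0 1 | exact a01 0 1 0 | exact a01 0 1 1
        | exact a01 1 0 0 | exact a01 1 0 1 | exact a01 1 1 0 | exact a01 1 1 1
        | exact a02 0 0 1 | exact a02 0 1 0 | exact a02 0 1 1
        | exact a02 1 0 0 | exact a02 1 0 1 | exact a02 1 1 0 | exact a02 1 1 1
        | exact a12 0 0 1 | exact a12 0 1 0 | exact a12 0 1 1
        | exact a12 1 0 0 | exact a12 1 0 1 | exact a12 1 1 0 | exact a12 1 1 1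
  refine key_lemma b1 b2 b3 (f 0 1 2) (f 0 2 1) (f 1 0 2) (f 1 2 0) (f 2 0 1) (f 2 1 0) ?_
  rw [← hf]
  have e3 : ∀ Ψ : Fin 3 → ℤ, conserves3 f Ψ → ∀ x : ZMod (0 + 3) → Fin 3,
      Ψ (glob3 f x 0) + Ψ (glob3 f x 1) + Ψ (glob3 f x 2)
        = Ψ (x 0) + Ψ (x 1) + Ψ (x 2) := by
    intro Ψ hc x
    have := hc 0 x
    rwa [sum_zmod3, sum_zmod3] at this
  have e4 : ∀ Ψ : Fin 3 → ℤ, conserves3 f Ψ → ∀ x : ZMod (1 + 3) → Fin 3,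
      Ψ (glob3 f x 0) + Ψ (glob3 f x 1) + Ψ (glob3 f x 2) + Ψ (glob3 f x 3)
        = Ψ (x 0) + Ψ (x 1) + Ψ (x 2) + Ψ (x 3) := by
    intro Ψ hc x
    have := hc 1 x
    rwa [sum_zmod4, sum_zmod4] at this
  exact ⟨⟨e3 _ c0 _, e3 _ c1 _, e3 _ c2 _⟩, ⟨e4 _ c0 _, e4 _ c1 _, e4 _ c2 _⟩,
    ⟨e4 _ c0 _, e4 _ c1 _, e4 _ c2 _⟩, ⟨e4 _ c0 _, e4 _ c1 _, e4 _ c2 _⟩,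
    ⟨e4 _ c0 _, e4 _ c1 _, e4 _ c2 _⟩⟩
end

section
/- If a ternary rule f: {0,1,2}^3 → {0,1,2} is all-conserving and its binary projection f|_{01} exists, then f|_{01} is a number-conserving elementary CA rule (i.e., one of rules 170, 184, 204, 226, 240). -/
set_option maxRecDepth 100000 in
lemma key_nc : ∀ g : Rule2,
    ((∀ x : ZMod 3 → Fin 2, (∑ i, (glob2 g x i).val) = ∑ i, (x i).val) ∧
     (∀ x : ZMod 4 → Fin 2, (∑ i, (glob2 g x i).val) = ∑ i, (x i).val) ∧
     (∀ x : ZMod 5 → Fin 2, (∑ i, (glob2 g x i).val) = ∑ i, (x i).val)) →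
    (wolfram2 g = 170 ∨ wolfram2 g = 184 ∨ wolfram2 g = 204 ∨
     wolfram2 g = 226 ∨ wolfram2 g = 240) := by decide

lemma psi1_i01 (b : Fin 2) : Ψ1 (i01 b) = (b.val : ℤ) := by
  fin_cases b <;> decide

/-- If `f` is all-conserving and its binary projection `f|_{01}` exists (equals
the binary rule `h`), then that projection is number-conserving, i.e. one of the
elementary rules 170, 184, 204, 226, 240. -/
theorem allConserving_projection01_number_conserving (f : Rule3) (h : Rule2)
    (hf : allConserving3 f) (hp : agrees01 f h) :
    numConserving2 h ∧ wolfram2 h ∈ ({170, 184, 204, 226, 240} : Set ℕ) := by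
  have hnc : numConserving2 h := by
    intro L x
    have hc := hf.2.1 L (fun i => i01 (x i))
    have hg : ∀ i, glob3 f (fun i => i01 (x i)) i = i01 (glob2 h x i) := by
      intro i; exact hp _ _ _
    have : (∑ i, ((glob2 h x i).val : ℤ)) = ∑ i, ((x i).val : ℤ) := by
      calc (∑ i, ((glob2 h x i).val : ℤ))
          = ∑ i, Ψ1 (glob3 f (fun i => i01 (x i)) i) := by
            refine Finset.sum_congr rfl fun i _ => ?_
            rw [hg i, psi1_i01]
        _ = ∑ i, Ψ1 (i01 (x i)) := hc
        _ = ∑ i, ((x i).val : ℤ) := Finset.sum_congr rfl fun i _ => psi1_i01 _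
    exact_mod_cast (by push_cast at this ⊢; exact this : ((∑ i, (glob2 h x i).val : ℕ) : ℤ) = (∑ i, (x i).val : ℕ))
  refine ⟨hnc, ?_⟩
  have := key_nc h ⟨hnc 0, hnc 1, hnc 2⟩
  simp only [Set.mem_insert_iff, Set.mem_singleton_iff]
  tauto
end
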